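/- Let a ∈ ℝ^K with a_k ≥ 0, ∑_k a_k = 1, 0 < λ < 1/K, and δ > 0. Then the function z ↦ -∑_k a_k log(z_k) + λ ∑_k log(δ + z_k), defined on the relative interior of the probability simplex, attains its minimum at some point of the simplex (i.e., a global minimizer exists). -/

import Mathlib

open BigOperators

/-- For `δ > 0`, the objective
`z ↦ -∑ a_k log z_k + λ ∑ log (δ + z_k)`, considered on the part of the
probability simplex where it is finite (i.e. `z_k > 0` whenever `a_k > 0`),
attains its minimum: a global minimizer exists. -/
theorem log_penalty_minimizer_exists
    (K : ℕ) (hK : 0 < K) (a : Fin K → ℝ) (ha : ∀ k, 0 ≤ a k)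
    (hsum : ∑ k, a k = 1) (lam : ℝ) (hlam : 0 < lam) (hlamK : lam < 1 / K)
    (δ : ℝ) (hδ : 0 < δ) :
    ∃ z ∈ {y : Fin K → ℝ | (∀ k, 0 ≤ y k) ∧ (∑ k, y k = 1) ∧
            ∀ k, a k ≠ 0 → 0 < y k},
      IsMinOn
        (fun y : Fin K → ℝ =>
          -(∑ k, a k * Real.log (y k)) + lam * ∑ k, Real.log (δ + y k))
        {y : Fin K → ℝ | (∀ k, 0 ≤ y k) ∧ (∑ k, y k = 1) ∧
          ∀ k, a k ≠ 0 → 0 < y k}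
        z := by
  classical
  set F : (Fin K → ℝ) → ℝ := fun y =>
    -(∑ k, a k * Real.log (y k)) + lam * ∑ k, Real.log (δ + y k) with hF
  set S : Set (Fin K → ℝ) := {y : Fin K → ℝ | (∀ k, 0 ≤ y k) ∧ (∑ k, y k = 1) ∧
          ∀ k, a k ≠ 0 → 0 < y k} with hSdef
  have hKpos : (0:ℝ) < K := by exact_mod_cast hK
  -- the support of a is nonempty
  have hT : ∃ j, a j ≠ 0 := by
    by_contra h
    push_neg at h
    simp [h] at hsum
  set T : Finset (Fin K) := Finset.univ.filter (fun k => a k ≠ 0) with hTdef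
  have hTne : T.Nonempty := by
    obtain ⟨j, hj⟩ := hT
    exact ⟨j, by simp [hTdef, hj]⟩
  set α : ℝ := T.inf' hTne a with hαdef
  have hαpos : 0 < α := by
    obtain ⟨j, hjT, hjval⟩ := T.exists_mem_eq_inf' hTne a
    have : a j ≠ 0 := by simpa [hTdef] using hjT
    rw [hαdef, hjval]
    exact lt_of_le_of_ne (ha j) (Ne.symm this)
  have hαle : ∀ k, a k ≠ 0 → α ≤ a k := by
    intro k hk
    exact Finset.inf'_le a (by simp [hTdef, hk])
  -- reference point
  set z0 : Fin K → ℝ := fun _ => 1 / K with hz0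
  have hz0S : z0 ∈ S := by
    refine ⟨fun k => by positivity, ?_, fun k _ => by positivity⟩
    simp [hz0, Finset.sum_const, Finset.card_univ]
    field_simp
  set M : ℝ := F z0 with hM
  set ε : ℝ := min (1 / K) (Real.exp ((lam * K * Real.log δ - M) / α)) with hε
  have hε0 : 0 < ε := lt_min (by positivity) (Real.exp_pos _)
  have hε1 : ε ≤ 1 / K := min_le_left _ _
  have hεle1 : ε ≤ 1 := hε1.trans (by
    rw [div_le_one hKpos]
    exact_mod_cast hK)
  have hεlog : lam * K * Real.log δ - α * Real.log ε ≥ M := by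
    have h1 : Real.log ε ≤ (lam * K * Real.log δ - M) / α := by
      calc Real.log ε ≤ Real.log (Real.exp ((lam * K * Real.log δ - M) / α)) :=
            Real.log_le_log hε0 (min_le_right _ _)
        _ = (lam * K * Real.log δ - M) / α := Real.log_exp _
    have h2 : α * Real.log ε ≤ lam * K * Real.log δ - M := by
      rw [mul_comm]
      exact (le_div_iff₀ hαpos).mp h1
    linarith
  -- elements of S have coordinates ≤ 1
  have hle1 : ∀ y ∈ S, ∀ j, y j ≤ 1 := by
    intro y hy j
    obtain ⟨hy1, hy2, _⟩ := hy
    calc y j ≤ ∑ k, y k := Finset.single_le_sum (fun k _ => hy1 k) (Finset.mem_univ j)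
      _ = 1 := hy2
  -- lower bound for F on S
  have hlb : ∀ y ∈ S, ∀ j, -(a j * Real.log (y j)) + lam * (K * Real.log δ) ≤ F y := by
    intro y hy j
    obtain ⟨hy1, hy2, hy3⟩ := hy
    have hterm : ∀ k, 0 ≤ -(a k * Real.log (y k)) := by
      intro k
      have : Real.log (y k) ≤ 0 := Real.log_nonpos (hy1 k) (hle1 y ⟨hy1, hy2, hy3⟩ k)
      nlinarith [ha k]
    have h1 : -(a j * Real.log (y j)) ≤ ∑ k, -(a k * Real.log (y k)) :=
      Finset.single_le_sum (fun k _ => hterm k) (Finset.mem_univ j)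
    have h1' : -(a j * Real.log (y j)) ≤ -(∑ k, a k * Real.log (y k)) := by
      simpa [Finset.sum_neg_distrib] using h1
    have h2 : (K : ℝ) * Real.log δ ≤ ∑ k, Real.log (δ + y k) := by
      calc (K : ℝ) * Real.log δ = ∑ _k : Fin K, Real.log δ := by
            simp [Finset.sum_const, Finset.card_univ, nsmul_eq_mul]
        _ ≤ ∑ k, Real.log (δ + y k) :=
            Finset.sum_le_sum (fun k _ =>
              Real.log_le_log hδ (le_add_of_nonneg_right (hy1 k)))
    have h2' : lam * ((K : ℝ) * Real.log δ) ≤ lam * ∑ k, Real.log (δ + y k) :=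
      mul_le_mul_of_nonneg_left h2 hlam.le
    rw [hF]
    dsimp only
    linarith
  -- the compact set
  set C : Set (Fin K → ℝ) := {y : Fin K → ℝ | (∀ k, 0 ≤ y k) ∧ (∑ k, y k = 1) ∧
          ∀ k, a k ≠ 0 → ε ≤ y k} with hCdef
  have hCS : C ⊆ S := by
    intro y hy
    exact ⟨hy.1, hy.2.1, fun k hk => lt_of_lt_of_le hε0 (hy.2.2 k hk)⟩
  have hz0C : z0 ∈ C := ⟨hz0S.1, hz0S.2.1, fun k _ => hε1⟩
  have hCclosed : IsClosed C := by
    have h1 : IsClosed {y : Fin K → ℝ | ∀ k, 0 ≤ y k} := by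
      have : {y : Fin K → ℝ | ∀ k, 0 ≤ y k} = ⋂ k, {y | 0 ≤ y k} := by
        ext y; simp
      rw [this]
      exact isClosed_iInter (fun k => isClosed_le continuous_const (continuous_apply k))
    have h2 : IsClosed {y : Fin K → ℝ | ∑ k, y k = 1} :=
      isClosed_eq (continuous_finset_sum _ (fun k _ => continuous_apply k)) continuous_const
    have h3 : IsClosed {y : Fin K → ℝ | ∀ k, a k ≠ 0 → ε ≤ y k} := by
      have : {y : Fin K → ℝ | ∀ k, a k ≠ 0 → ε ≤ y k}
          = ⋂ k, {y | a k ≠ 0 → ε ≤ y k} := by ext y; simp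
      rw [this]
      refine isClosed_iInter (fun k => ?_)
      by_cases hk : a k = 0
      · simp [hk]
      · have : {y : Fin K → ℝ | a k ≠ 0 → ε ≤ y k} = {y | ε ≤ y k} := by
          ext y; simp [hk]
        rw [this]
        exact isClosed_le continuous_const (continuous_apply k)
    have : C = {y : Fin K → ℝ | ∀ k, 0 ≤ y k} ∩
        ({y | ∑ k, y k = 1} ∩ {y | ∀ k, a k ≠ 0 → ε ≤ y k}) := by
      ext y; simp [hCdef, and_assoc]
    rw [this]
    exact h1.inter (h2.inter h3)
  have hCsub : C ⊆ Set.pi Set.univ (fun _ : Fin K => Set.Icc (0:ℝ) 1) := by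
    intro y hy
    intro k _
    exact ⟨hy.1 k, hle1 y (hCS hy) k⟩
  have hCcompact : IsCompact C :=
    IsCompact.of_isClosed_subset (isCompact_univ_pi (fun _ => isCompact_Icc))
      hCclosed hCsub
  -- continuity of F on C
  have hFcont : ContinuousOn F C := by
    apply ContinuousOn.add
    · apply ContinuousOn.neg
      apply continuousOn_finset_sum
      intro k _
      by_cases hk : a k = 0
      · simp only [hk, zero_mul]
        exact continuousOn_const
      · apply ContinuousOn.mul continuousOn_const
        apply ContinuousOn.log (continuous_apply k).continuousOn
        intro y hy
        exact ne_of_gt (lt_of_lt_of_le hε0 (hy.2.2 k hk))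
    · apply ContinuousOn.mul continuousOn_const
      apply continuousOn_finset_sum
      intro k _
      apply ContinuousOn.log (continuousOn_const.add (continuous_apply k).continuousOn)
      intro y hy
      have := hy.1 k
      exact ne_of_gt (add_pos_of_pos_of_nonneg hδ this)
  obtain ⟨z, hzC, hzmin⟩ := hCcompact.exists_isMinOn ⟨z0, hz0C⟩ hFcont
  refine ⟨z, hCS hzC, ?_⟩
  rw [isMinOn_iff]
  intro y hyS
  have hzz0 : F z ≤ M := hzmin hz0C
  by_cases hyC : y ∈ C
  · exact hzmin hyC
  · -- some coordinate with a j ≠ 0 is below ε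
    obtain ⟨hy1, hy2, hy3⟩ := hyS
    have : ∃ j, a j ≠ 0 ∧ y j < ε := by
      by_contra h
      push_neg at h
      exact hyC ⟨hy1, hy2, fun k hk => h k hk⟩
    obtain ⟨j, hj, hjlt⟩ := this
    have hyj0 : 0 < y j := hy3 j hj
    have hlog : Real.log (y j) < Real.log ε := Real.log_lt_log hyj0 hjlt
    have hlognp : Real.log (y j) ≤ 0 :=
      Real.log_nonpos (hy1 j) (hle1 y ⟨hy1, hy2, hy3⟩ j)
    have h1 : α * (-Real.log (y j)) ≤ a j * (-Real.log (y j)) :=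
      mul_le_mul_of_nonneg_right (hαle j hj) (by linarith)
    have h2 : α * (-Real.log ε) ≤ α * (-Real.log (y j)) :=
      mul_le_mul_of_nonneg_left (by linarith) hαpos.le
    have h3 := hlb y ⟨hy1, hy2, hy3⟩ j
    have : M ≤ F y := by nlinarith
    linarith
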